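/- The function h(a) = (1/2π) ∫₀^{2π} (1 + a cos x) log(1 + a cos x) dx is 1-Lipschitz on [-1,1]. -/

import Mathlib

open Real MeasureTheory intervalIntegral Set Filter

private lemma mulLog_ineq {u v : ℝ} (hu : 0 < u) (hv : 0 < v) :
    u * Real.log u - v * Real.log v ≤ (1 + Real.log u) * (u - v) := by
  have h := Real.log_le_sub_one_of_pos (div_pos hu hv)
  rw [Real.log_div hu.ne' hv.ne'] at h
  have h2 : v * (Real.log u - Real.log v) ≤ u - v := by
    calc v * (Real.log u - Real.log v) ≤ v * (u / v - 1) :=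
          mul_le_mul_of_nonneg_left h hv.le
    _ = u - v := by field_simp
  nlinarith [h2]

private lemma pos_denom {t : ℝ} (ht : t ∈ Set.Ioo (-1:ℝ) 1) (x : ℝ) :
    0 < 1 + t * Real.cos x := by
  have habs : |t * Real.cos x| < 1 := by
    rw [abs_mul]
    calc |t| * |Real.cos x| ≤ |t| * 1 :=
          mul_le_mul_of_nonneg_left (Real.abs_cos_le_one x) (abs_nonneg t)
    _ = |t| := mul_one _
    _ < 1 := abs_lt.mpr ⟨ht.1, ht.2⟩
  linarith [(abs_lt.mp habs).1]

private lemma I_parts {t : ℝ} (ht : t ∈ Set.Ioo (-1:ℝ) 1) :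
    (∫ x in (0:ℝ)..(2*Real.pi), Real.cos x * Real.log (1 + t * Real.cos x))
      = ∫ x in (0:ℝ)..(2*Real.pi), t * Real.sin x ^ 2 / (1 + t * Real.cos x) := by
  have hpos := pos_denom ht
  have hderiv : ∀ x ∈ Set.uIcc (0:ℝ) (2*Real.pi),
      HasDerivAt (fun y => Real.log (1 + t * Real.cos y))
        ((t * -Real.sin x) / (1 + t * Real.cos x)) x := by
    intro x _
    exact (((Real.hasDerivAt_cos x).const_mul t).const_add 1).log (hpos x).ne'
  have hcont1 : Continuous fun x => Real.cos x * Real.log (1 + t * Real.cos x) :=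
    Real.continuous_cos.mul
      ((continuous_const.add (continuous_const.mul Real.continuous_cos)).log
        fun x => (hpos x).ne')
  have hcont2 : Continuous fun x => Real.sin x * ((t * -Real.sin x) / (1 + t * Real.cos x)) :=
    Real.continuous_sin.mul
      (((continuous_const.mul Real.continuous_sin.neg)).div
        (continuous_const.add (continuous_const.mul Real.continuous_cos))
        fun x => (hpos x).ne')
  have key := intervalIntegral.integral_deriv_mul_eq_sub
    (u := Real.sin) (v := fun y => Real.log (1 + t * Real.cos y))
    (u' := Real.cos) (v' := fun x => (t * -Real.sin x) / (1 + t * Real.cos x))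
    (fun x _ => Real.hasDerivAt_sin x) hderiv
    (Real.continuous_cos.intervalIntegrable _ _)
    (((((continuous_const.mul Real.continuous_sin.neg)).div
        (continuous_const.add (continuous_const.mul Real.continuous_cos))
        fun x => (hpos x).ne')).intervalIntegrable _ _)
  rw [intervalIntegral.integral_add (hcont1.intervalIntegrable _ _)
    (hcont2.intervalIntegrable _ _)] at key
  simp only [Real.sin_two_pi, Real.sin_zero, zero_mul, sub_zero] at key
  have : (fun x => t * Real.sin x ^ 2 / (1 + t * Real.cos x))
      = fun x => -(Real.sin x * ((t * -Real.sin x) / (1 + t * Real.cos x))) := by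
    funext x; ring
  rw [this, intervalIntegral.integral_neg]
  linarith [key]

private lemma I_bound {t : ℝ} (ht : t ∈ Set.Ioo (-1:ℝ) 1) :
    |∫ x in (0:ℝ)..(2*Real.pi), Real.cos x * Real.log (1 + t * Real.cos x)| ≤ 2 * Real.pi := by
  have hpos := pos_denom ht
  set g : ℝ → ℝ := fun x => t * Real.sin x ^ 2 / (1 + t * Real.cos x) with hg
  have hgc : Continuous g :=
    (continuous_const.mul (Real.continuous_sin.pow 2)).div
      (continuous_const.add (continuous_const.mul Real.continuous_cos))
      fun x => (hpos x).ne'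
  rw [I_parts ht]
  -- fold [0, 2π] onto [0, π]
  have split : (∫ x in (0:ℝ)..(2*Real.pi), g x)
      = (∫ x in (0:ℝ)..Real.pi, g x) + ∫ x in Real.pi..(2*Real.pi), g x :=
    (intervalIntegral.integral_add_adjacent_intervals
      (hgc.intervalIntegrable _ _) (hgc.intervalIntegrable _ _)).symm
  have shift : (∫ x in Real.pi..(2*Real.pi), g x) = ∫ x in (0:ℝ)..Real.pi, g (x + Real.pi) := by
    rw [intervalIntegral.integral_comp_add_right (a := 0) (b := Real.pi) g Real.pi]
    norm_num [two_mul]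
  have hgc2 : Continuous fun x => g (x + Real.pi) := by fun_prop
  have hadd := intervalIntegral.integral_add (μ := volume) (a := (0:ℝ)) (b := Real.pi)
    (hgc.intervalIntegrable _ _) (hgc2.intervalIntegrable _ _)
  have comb : (∫ x in (0:ℝ)..(2*Real.pi), g x)
      = ∫ x in (0:ℝ)..Real.pi, (g x + g (x + Real.pi)) := by
    rw [split, shift]; exact hadd.symm
  rw [comb]
  have hbd : ∀ x, ‖g x + g (x + Real.pi)‖ ≤ 2 := by
    intro x
    have d1 := hpos x
    have d2 : 0 < 1 - t * Real.cos x := by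
      have := hpos (x + Real.pi)
      rwa [Real.cos_add_pi, mul_neg, ← sub_eq_add_neg] at this
    have hdd : 0 < 1 - t ^ 2 * Real.cos x ^ 2 := by nlinarith
    have heq : g x + g (x + Real.pi)
        = 2 * t * Real.sin x ^ 2 / (1 - t ^ 2 * Real.cos x ^ 2) := by
      simp only [hg, Real.sin_add_pi, Real.cos_add_pi, neg_sq, mul_neg, ← sub_eq_add_neg]
      field_simp
      ring
    rw [heq, Real.norm_eq_abs, abs_div, abs_of_pos hdd, div_le_iff₀ hdd]
    have hsc := Real.sin_sq_add_cos_sq x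
    have hts : t * Real.sin x ^ 2 = t * (1 - Real.cos x ^ 2) := by
      rw [show Real.sin x ^ 2 = 1 - Real.cos x ^ 2 from by linarith]
    have e1 : (0:ℝ) ≤ (1 + t) * (1 - t * Real.cos x ^ 2) :=
      mul_nonneg (by linarith [ht.1])
        (by nlinarith [mul_nonneg (by linarith [ht.2] : (0:ℝ) ≤ 1 - t) (sq_nonneg (Real.cos x)),
          sq_nonneg (Real.sin x)])
    have e2 : (0:ℝ) ≤ (1 - t) * (1 + t * Real.cos x ^ 2) :=
      mul_nonneg (by linarith [ht.2])
        (by nlinarith [mul_nonneg (by linarith [ht.1] : (0:ℝ) ≤ 1 + t) (sq_nonneg (Real.cos x)),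
          sq_nonneg (Real.sin x)])
    rw [abs_le]
    constructor
    · nlinarith [e1, hts]
    · nlinarith [e2, hts]
  calc |∫ x in (0:ℝ)..Real.pi, (g x + g (x + Real.pi))|
      ≤ 2 * |Real.pi - 0| := intervalIntegral.norm_integral_le_of_norm_le_const fun x _ => hbd x
    _ = 2 * Real.pi := by rw [sub_zero, abs_of_pos Real.pi_pos]

private lemma sandwich_upper {a b : ℝ} (ha : a ∈ Set.Ioo (-1:ℝ) 1) (hb : b ∈ Set.Ioo (-1:ℝ) 1) :
    (∫ x in (0:ℝ)..(2*Real.pi), (1 + a * Real.cos x) * Real.log (1 + a * Real.cos x))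
      - (∫ x in (0:ℝ)..(2*Real.pi), (1 + b * Real.cos x) * Real.log (1 + b * Real.cos x))
    ≤ (a - b) * ∫ x in (0:ℝ)..(2*Real.pi), Real.cos x * Real.log (1 + a * Real.cos x) := by
  have hpa := pos_denom ha
  have hpb := pos_denom hb
  have hFa : Continuous fun x => (1 + a * Real.cos x) * Real.log (1 + a * Real.cos x) := by
    fun_prop
  have hFb : Continuous fun x => (1 + b * Real.cos x) * Real.log (1 + b * Real.cos x) := by
    fun_prop
  have hLa : Continuous fun x => Real.cos x * Real.log (1 + a * Real.cos x) :=
    Real.continuous_cos.mul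
      ((continuous_const.add (continuous_const.mul Real.continuous_cos)).log
        fun x => (hpa x).ne')
  have hR : Continuous fun x =>
      (1 + Real.log (1 + a * Real.cos x)) * ((a - b) * Real.cos x) :=
    (continuous_const.add ((continuous_const.add
      (continuous_const.mul Real.continuous_cos)).log fun x => (hpa x).ne')).mul
      (continuous_const.mul Real.continuous_cos)
  rw [← intervalIntegral.integral_sub (hFa.intervalIntegrable _ _) (hFb.intervalIntegrable _ _)]
  have step1 : (∫ x in (0:ℝ)..(2*Real.pi),
        ((1 + a * Real.cos x) * Real.log (1 + a * Real.cos x)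
          - (1 + b * Real.cos x) * Real.log (1 + b * Real.cos x)))
      ≤ ∫ x in (0:ℝ)..(2*Real.pi),
        (1 + Real.log (1 + a * Real.cos x)) * ((a - b) * Real.cos x) := by
    apply intervalIntegral.integral_mono_on (by positivity)
      ((hFa.sub hFb).intervalIntegrable _ _) (hR.intervalIntegrable _ _)
    intro x _
    have key := mulLog_ineq (hpa x) (hpb x)
    have : (1 + a * Real.cos x) - (1 + b * Real.cos x) = (a - b) * Real.cos x := by ring
    rw [this] at key
    exact key
  refine step1.trans (le_of_eq ?_)
  rw [show (fun x => (1 + Real.log (1 + a * Real.cos x)) * ((a - b) * Real.cos x))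
      = fun x => (a - b) * (Real.cos x + Real.cos x * Real.log (1 + a * Real.cos x)) from
    funext fun x => by ring]
  rw [intervalIntegral.integral_const_mul,
    intervalIntegral.integral_add (Real.continuous_cos.intervalIntegrable _ _)
      (hLa.intervalIntegrable _ _), integral_cos]
  simp [Real.sin_two_pi]

private lemma lip_core {a b : ℝ} (ha : a ∈ Set.Ioo (-1:ℝ) 1) (hb : b ∈ Set.Ioo (-1:ℝ) 1) :
    |(∫ x in (0:ℝ)..(2*Real.pi), (1 + a * Real.cos x) * Real.log (1 + a * Real.cos x))
      - (∫ x in (0:ℝ)..(2*Real.pi), (1 + b * Real.cos x) * Real.log (1 + b * Real.cos x))|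
    ≤ |a - b| * (2 * Real.pi) := by
  have up1 := sandwich_upper ha hb
  have up2 := sandwich_upper hb ha
  have bIa := I_bound ha
  have bIb := I_bound hb
  have e1 : (a - b) * (∫ x in (0:ℝ)..(2*Real.pi),
      Real.cos x * Real.log (1 + a * Real.cos x)) ≤ |a - b| * (2 * Real.pi) := by
    refine le_trans (le_abs_self _) ?_
    rw [abs_mul]
    exact mul_le_mul_of_nonneg_left bIa (abs_nonneg _)
  have e2 : (b - a) * (∫ x in (0:ℝ)..(2*Real.pi),
      Real.cos x * Real.log (1 + b * Real.cos x)) ≤ |a - b| * (2 * Real.pi) := by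
    refine le_trans (le_abs_self _) ?_
    rw [abs_mul, abs_sub_comm b a]
    exact mul_le_mul_of_nonneg_left bIb (abs_nonneg _)
  rw [abs_le]
  constructor <;> linarith

/-- `h a = (1/2π) ∫₀^{2π} (1 + a cos x) log(1 + a cos x) dx` is 1-Lipschitz on `[-1,1]`. -/
theorem stmt2 :
    LipschitzOnWith 1
      (fun a : ℝ => (1 / (2 * Real.pi)) * ∫ x in (0 : ℝ)..(2 * Real.pi),
        (1 + a * Real.cos x) * Real.log (1 + a * Real.cos x))
      (Set.Icc (-1 : ℝ) 1) := by
  set h : ℝ → ℝ := fun a : ℝ => (1 / (2 * Real.pi)) * ∫ x in (0 : ℝ)..(2 * Real.pi),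
        (1 + a * Real.cos x) * Real.log (1 + a * Real.cos x) with hh
  have hπ : (0:ℝ) < 2 * Real.pi := by positivity
  -- continuity of h
  have hFcont : Continuous (Function.uncurry fun (a x : ℝ) =>
      (1 + a * Real.cos x) * Real.log (1 + a * Real.cos x)) := by
    apply Continuous.mul_log
    fun_prop
  have hcont : Continuous h :=
    continuous_const.mul
      (intervalIntegral.continuous_parametric_intervalIntegral_of_continuous'
        (μ := MeasureTheory.volume) hFcont 0 (2 * Real.pi))
  -- Lipschitz estimate on the open interval
  have hlip : ∀ a ∈ Set.Ioo (-1:ℝ) 1, ∀ b ∈ Set.Ioo (-1:ℝ) 1,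
      dist (h a) (h b) ≤ dist a b := by
    intro a ha b hb
    rw [Real.dist_eq, Real.dist_eq, hh]
    have : (1 / (2 * Real.pi)) * (∫ x in (0:ℝ)..(2*Real.pi),
          (1 + a * Real.cos x) * Real.log (1 + a * Real.cos x))
        - (1 / (2 * Real.pi)) * (∫ x in (0:ℝ)..(2*Real.pi),
          (1 + b * Real.cos x) * Real.log (1 + b * Real.cos x))
        = (1 / (2 * Real.pi)) * ((∫ x in (0:ℝ)..(2*Real.pi),
          (1 + a * Real.cos x) * Real.log (1 + a * Real.cos x))
        - ∫ x in (0:ℝ)..(2*Real.pi),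
          (1 + b * Real.cos x) * Real.log (1 + b * Real.cos x)) := by ring
    rw [this, abs_mul, abs_of_pos (by positivity : (0:ℝ) < 1 / (2 * Real.pi))]
    calc (1 / (2 * Real.pi)) * |(∫ x in (0:ℝ)..(2*Real.pi),
          (1 + a * Real.cos x) * Real.log (1 + a * Real.cos x))
        - ∫ x in (0:ℝ)..(2*Real.pi),
          (1 + b * Real.cos x) * Real.log (1 + b * Real.cos x)|
        ≤ (1 / (2 * Real.pi)) * (|a - b| * (2 * Real.pi)) :=
          mul_le_mul_of_nonneg_left (lip_core ha hb) (by positivity)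
      _ = |a - b| := by field_simp
  -- extend to the closed interval by continuity
  apply LipschitzOnWith.of_dist_le_mul
  intro a ha b hb
  rw [NNReal.coe_one, one_mul]
  have key : ∀ t ∈ Set.Ioo (0:ℝ) 1, dist (h (t * a)) (h (t * b)) ≤ dist a b := by
    intro t ht
    have hta : t * a ∈ Set.Ioo (-1:ℝ) 1 := by
      constructor <;> nlinarith [ha.1, ha.2, ht.1, ht.2]
    have htb : t * b ∈ Set.Ioo (-1:ℝ) 1 := by
      constructor <;> nlinarith [hb.1, hb.2, ht.1, ht.2]
    refine (hlip _ hta _ htb).trans ?_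
    rw [Real.dist_eq, Real.dist_eq, ← mul_sub, abs_mul, abs_of_pos ht.1]
    nlinarith [abs_nonneg (a - b), ht.2]
  have h1 : Filter.Tendsto (fun t : ℝ => dist (h (t * a)) (h (t * b)))
      (nhdsWithin 1 (Set.Iio 1)) (nhds (dist (h a) (h b))) := by
    apply Filter.Tendsto.mono_left _ nhdsWithin_le_nhds
    have hc : Continuous fun t : ℝ => dist (h (t * a)) (h (t * b)) :=
      (hcont.comp (continuous_id.mul continuous_const)).dist
        (hcont.comp (continuous_id.mul continuous_const))
    simpa using hc.tendsto 1
  have h2 : ∀ᶠ t in nhdsWithin 1 (Set.Iio 1),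
      dist (h (t * a)) (h (t * b)) ≤ dist a b := by
    filter_upwards [Ioo_mem_nhdsLT_of_mem (Set.mem_Ioc.mpr ⟨one_pos, le_refl (1:ℝ)⟩)]
      with t ht
    exact key t ht
  exact le_of_tendsto h1 h2
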